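/- Let n = n_r + n_d + m̂ where m̂ = m_1 + … + m_{n_c} and n_c ≥ 1, with categorical blocks B_h ⊆ {1,…,n}, B_h = {n_r + n_d + m̂_{h−1} + 1, …, n_r + n_d + m̂_h}, and let j_h = n_r + n_d + m̂_h denote the last index of block B_h. Let x^1,…,x^k ∈ ℝ^n be points each satisfying the unary-encoding constraints: for every i and every h, x^i_j ∈ {0,1} for all j ∈ B_h and Σ_{j ∈ B_h} x^i_j = 1. Let Φ be the k×k matrix with Φ_{il} = φ(‖x^i − x^l‖) for a function φ : ℝ → ℝ, let P be the k×(n+1) matrix whose i-th row is ((x^i)^⊤, 1), and let P̂ be obtained from P by deleting the columns with indices j_1,…,j_{n_c}. Let F ∈ ℝ^k. If the full system [[Φ, P],[P^⊤, 0]] (λ; α) = (F; 0) has a solution (λ, α) ∈ ℝ^k × ℝ^{n+1}, then the reduced system [[Φ, P̂],[P̂^⊤, 0]] (λ; α') = (F; 0) has a solution (λ, α') ∈ ℝ^k × ℝ^{n+1−n_c}. -/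

import Mathlib

open Matrix

/-- Proposition "Reduced linear system": if the full RBF interpolation system
has a solution, then so does the reduced system obtained by deleting the last
column of each categorical block from `P`. -/
theorem rbf_reduced_linear_system
    (nr nd nc k : ℕ) (hnc : 1 ≤ nc) (m : ℕ → ℕ)
    (n : ℕ) (hn : n = nr + nd + ∑ i ∈ Finset.range nc, m i)
    (X : Fin k → EuclideanSpace ℝ (Fin n))
    (hbin : ∀ i : Fin k, ∀ h : ℕ, h < nc → ∀ j : Fin n,
      (nr + nd + ∑ i' ∈ Finset.range h, m i' ≤ (j : ℕ) ∧
        (j : ℕ) < nr + nd + ∑ i' ∈ Finset.range (h + 1), m i') →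
      (X i j = 0 ∨ X i j = 1))
    (hsum : ∀ i : Fin k, ∀ h : ℕ, h < nc →
      ∑ j ∈ Finset.univ.filter (fun j : Fin n =>
        nr + nd + ∑ i' ∈ Finset.range h, m i' ≤ (j : ℕ) ∧
        (j : ℕ) < nr + nd + ∑ i' ∈ Finset.range (h + 1), m i'), X i j = 1)
    (φ : ℝ → ℝ)
    (Φ : Matrix (Fin k) (Fin k) ℝ) (hΦ : ∀ i l, Φ i l = φ ‖X i - X l‖)
    (P : Matrix (Fin k) (Fin (n + 1)) ℝ)
    (hP : ∀ (i : Fin k) (l : Fin (n + 1)),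
      P i l = if hl : (l : ℕ) < n then X i ⟨(l : ℕ), hl⟩ else 1)
    (D : Finset (Fin (n + 1)))
    (hD : ∀ l : Fin (n + 1), l ∈ D ↔
      ∃ h < nc, (l : ℕ) + 1 = nr + nd + ∑ i' ∈ Finset.range (h + 1), m i')
    (F : Fin k → ℝ)
    (lam : Fin k → ℝ) (α : Fin (n + 1) → ℝ)
    (hsol : (Matrix.fromBlocks Φ P Pᵀ 0).mulVec (Sum.elim lam α) = Sum.elim F 0) :
    ∃ α' : {l : Fin (n + 1) // l ∉ D} → ℝ,
      (Matrix.fromBlocks Φ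
        (Matrix.of fun (i : Fin k) (l : {l : Fin (n + 1) // l ∉ D}) => P i l.val)
        (Matrix.of fun (i : Fin k) (l : {l : Fin (n + 1) // l ∉ D}) => P i l.val)ᵀ
        0).mulVec (Sum.elim lam α') = Sum.elim F 0 := by
  classical
  set Msum : ℕ → ℕ := fun h => ∑ i' ∈ Finset.range h, m i' with hMsum
  have hMdef : ∀ h : ℕ, Msum h = ∑ i' ∈ Finset.range h, m i' := fun _ => rfl
  have hMmono : ∀ a b : ℕ, a ≤ b → Msum a ≤ Msum b := by
    intro a b hab
    exact Finset.sum_le_sum_of_subset (Finset.range_subset_range.2 hab)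
  have hMstep : ∀ h : ℕ, Msum (h + 1) = Msum h + m h := fun h => Finset.sum_range_succ m h
  -- the constant column (index n) is not deleted
  have hlastD : Fin.last n ∉ D := by
    intro hmem
    obtain ⟨h, hh, hv⟩ := (hD _).1 hmem
    have h1 : Msum (h + 1) ≤ Msum nc := hMmono _ _ hh
    have hb1 := hMdef (h + 1)
    have hb2 := hMdef nc
    simp only [Fin.val_last] at hv
    omega
  -- extract the equations of the full system
  rw [Matrix.fromBlocks_mulVec] at hsol
  have htop : ∀ i : Fin k, (Φ *ᵥ lam) i + (P *ᵥ α) i = F i := by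
    intro i
    have := congrFun hsol (Sum.inl i)
    simpa using this
  have hbot : ∀ l : Fin (n + 1), (Pᵀ *ᵥ lam) l = 0 := by
    intro l
    have := congrFun hsol (Sum.inr l)
    simpa using this
  -- block membership predicate
  set inB : ℕ → ℕ → Prop := fun h l =>
    nr + nd + Msum h ≤ l ∧ l < nr + nd + Msum (h + 1) with hinB
  have huniq : ∀ h1 h2 l : ℕ, h1 < nc → h2 < nc → inB h1 l → inB h2 l → h1 = h2 := by
    intro h1 h2 l _ _ hb1 hb2
    by_contra hne
    rcases Nat.lt_or_ge h1 h2 with hlt | hge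
    · have := hMmono (h1 + 1) h2 hlt
      simp only [hinB] at hb1 hb2
      omega
    · have hlt : h2 < h1 := by omega
      have := hMmono (h2 + 1) h1 hlt
      simp only [hinB] at hb1 hb2
      omega
  set S : ℝ := ∑ d ∈ D, α d with hS
  set g : Fin (n + 1) → ℝ := fun l =>
    α l + (if (l : ℕ) = n then S else 0)
      - ∑ d ∈ D.filter (fun d : Fin (n + 1) => ∃ h, h < nc ∧ inB h (l : ℕ) ∧ inB h (d : ℕ)), α d with hg
  -- main identity
  have main : ∀ i : Fin k,
      ∑ l : {l : Fin (n + 1) // l ∉ D}, P i l.val * g l.val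
        = ∑ l : Fin (n + 1), P i l * α l := by
    intro i
    have mpos : ∀ h, h < nc → 1 ≤ m h := by
      intro h hh
      by_contra hm
      have h0 : m h = 0 := by omega
      have h1 := hsum i h hh
      rw [Finset.sum_filter] at h1
      have hz : ∀ j : Fin n,
          (if nr + nd + ∑ i' ∈ Finset.range h, m i' ≤ (j : ℕ) ∧
              (j : ℕ) < nr + nd + ∑ i' ∈ Finset.range (h + 1), m i'
            then X i j else 0) = 0 := by
        intro j
        rw [if_neg]
        have := Finset.sum_range_succ m h
        omega
      rw [Finset.sum_congr rfl (fun j _ => hz j), Finset.sum_const_zero] at h1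
      exact one_ne_zero h1.symm
    -- key column identity
    have key : ∀ d ∈ D,
        ∑ l ∈ Dᶜ.filter (fun l : Fin (n + 1) => ∃ h, h < nc ∧ inB h (l : ℕ) ∧ inB h (d : ℕ)), P i l
          = 1 - P i d := by
      intro d hd
      obtain ⟨h, hh, hdval⟩ := (hD d).1 hd
      have hmh := mpos h hh
      have hs := hMstep h
      have hb1 := hMdef (h + 1)
      have hbc := hMdef nc
      have hbh := hMdef h
      have hdB : inB h (d : ℕ) := by
        simp only [hinB]
        constructor <;> omega
      have hblt : nr + nd + Msum (h + 1) ≤ n := by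
        have := hMmono (h + 1) nc hh
        omega
      have hset : Dᶜ.filter (fun l : Fin (n + 1) => ∃ h', h' < nc ∧ inB h' (l : ℕ) ∧ inB h' (d : ℕ))
          = (Finset.univ.filter (fun l : Fin (n + 1) => inB h (l : ℕ))).erase d := by
        ext l
        simp only [Finset.mem_erase, Finset.mem_filter, Finset.mem_compl, Finset.mem_univ,
          true_and]
        constructor
        · rintro ⟨hlD, h', hh', hbl, hbd⟩
          have hhe : h' = h := huniq h' h (d : ℕ) hh' hh hbd hdB
          subst hhe
          exact ⟨fun e => hlD (e ▸ hd), hbl⟩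
        · rintro ⟨hne, hbl⟩
          refine ⟨?_, h, hh, hbl, hdB⟩
          intro hlD
          obtain ⟨h2, hh2, hlval⟩ := (hD l).1 hlD
          have hs2 := hMstep h2
          have hb2 := hMdef (h2 + 1)
          have hb2' := hMdef h2
          have hm2 := mpos h2 hh2
          have hlB : inB h2 (l : ℕ) := by
            simp only [hinB]
            constructor <;> omega
          have hhe : h2 = h := huniq h2 h (l : ℕ) hh2 hh hlB hbl
          subst hhe
          exact hne (Fin.ext (by omega))
      rw [hset, Finset.sum_erase_eq_sub (show d ∈ Finset.univ.filter (fun l : Fin (n + 1) => inB h (l : ℕ)) from Finset.mem_filter.2 ⟨Finset.mem_univ _, hdB⟩)]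
      have hblock : ∑ l ∈ Finset.univ.filter (fun l : Fin (n + 1) => inB h (l : ℕ)), P i l
          = 1 := by
        rw [Finset.sum_filter, Fin.sum_univ_castSucc]
        have hlastzero :
            (if inB h ((Fin.last n : Fin (n + 1)) : ℕ) then P i (Fin.last n) else 0) = 0 := by
          rw [if_neg]
          simp only [hinB, Fin.val_last]
          omega
        rw [hlastzero, add_zero]
        have hsum1 := hsum i h hh
        rw [Finset.sum_filter] at hsum1
        rw [← hsum1]
        apply Finset.sum_congr rfl
        intro j _
        have hiff : (nr + nd + ∑ i' ∈ Finset.range h, m i' ≤ (j : ℕ) ∧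
            (j : ℕ) < nr + nd + ∑ i' ∈ Finset.range (h + 1), m i')
            ↔ inB h ((j.castSucc : Fin (n + 1)) : ℕ) := by
          simp only [hinB, Fin.coe_castSucc, hMsum]
        by_cases hb : inB h ((j.castSucc : Fin (n + 1)) : ℕ)
        · rw [if_pos (hiff.2 hb), if_pos hb, hP]
          rw [dif_pos (show ((j.castSucc : Fin (n + 1)) : ℕ) < n from j.isLt)]
          rfl
        · rw [if_neg (fun hc => hb (hiff.1 hc)), if_neg hb]
      rw [hblock]
    -- now compute
    have hsub : ∑ l ∈ Dᶜ, P i l * g l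
        = ∑ l : {l : Fin (n + 1) // l ∉ D}, P i l.val * g l.val :=
      Finset.sum_subtype Dᶜ (fun x : Fin (n + 1) => Finset.mem_compl) (fun l => P i l * g l)
    rw [← hsub]
    have hsplit : ∑ l ∈ Dᶜ, P i l * g l
        = (∑ l ∈ Dᶜ, P i l * α l)
          + (∑ l ∈ Dᶜ, P i l * (if (l : ℕ) = n then S else 0))
          - ∑ l ∈ Dᶜ, P i l *
              ∑ d ∈ D.filter (fun d : Fin (n + 1) => ∃ h, h < nc ∧ inB h (l : ℕ) ∧ inB h (d : ℕ)), α d := by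
      rw [← Finset.sum_add_distrib, ← Finset.sum_sub_distrib]
      apply Finset.sum_congr rfl
      intro l _
      simp only [hg]
      ring
    have hB : ∑ l ∈ Dᶜ, P i l * (if (l : ℕ) = n then S else 0) = S := by
      rw [Finset.sum_eq_single (Fin.last n)]
      · have h1 : P i (Fin.last n) = 1 := by
          rw [hP, dif_neg]
          simp [Fin.val_last]
        rw [h1, if_pos (by simp [Fin.val_last]), one_mul]
      · intro b _ hb
        rw [if_neg, mul_zero]
        intro hbn
        exact hb (Fin.ext (by simp [Fin.val_last, hbn]))
      · intro habs
        exact absurd (Finset.mem_compl.2 hlastD) habs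
    have hC : ∑ l ∈ Dᶜ, P i l *
          ∑ d ∈ D.filter (fun d : Fin (n + 1) => ∃ h, h < nc ∧ inB h (l : ℕ) ∧ inB h (d : ℕ)), α d
        = S - ∑ d ∈ D, P i d * α d := by
      have step1 : ∀ l : Fin (n + 1), P i l *
            ∑ d ∈ D.filter (fun d : Fin (n + 1) => ∃ h, h < nc ∧ inB h (l : ℕ) ∧ inB h (d : ℕ)), α d
          = ∑ d ∈ D, if ∃ h, h < nc ∧ inB h (l : ℕ) ∧ inB h (d : ℕ)
              then P i l * α d else 0 := by
        intro l
        rw [Finset.sum_filter, Finset.mul_sum]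
        apply Finset.sum_congr rfl
        intro d _
        rw [mul_ite, mul_zero]
      rw [Finset.sum_congr rfl (fun l _ => step1 l), Finset.sum_comm]
      have step2 : ∀ d ∈ D,
          (∑ l ∈ Dᶜ, if ∃ h, h < nc ∧ inB h (l : ℕ) ∧ inB h (d : ℕ)
              then P i l * α d else 0)
            = (1 - P i d) * α d := by
        intro d hd
        rw [← Finset.sum_filter, ← Finset.sum_mul, key d hd]
      rw [Finset.sum_congr rfl step2]
      rw [hS, ← Finset.sum_sub_distrib]
      apply Finset.sum_congr rfl
      intro d _
      ring
    rw [hsplit, hB, hC]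
    have : ∑ l ∈ Dᶜ, P i l * α l + ∑ l ∈ D, P i l * α l = ∑ l, P i l * α l :=
      Finset.sum_compl_add_sum D (fun l => P i l * α l)
    linarith [this]
  -- assemble
  refine ⟨fun l => g l.val, ?_⟩
  rw [Matrix.fromBlocks_mulVec]
  funext s
  cases s with
  | inl i =>
    simp only [Sum.elim_inl, Sum.elim_comp_inl, Sum.elim_comp_inr, Pi.add_apply]
    have hred : ((Matrix.of fun (i : Fin k) (l : {l : Fin (n + 1) // l ∉ D}) => P i l.val)
        *ᵥ fun l => g l.val) i = (P *ᵥ α) i := by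
      simp only [Matrix.mulVec, dotProduct, Matrix.of_apply]
      exact main i
    rw [hred]
    exact htop i
  | inr l =>
    simp only [Sum.elim_inr, Sum.elim_comp_inl, Sum.elim_comp_inr, Pi.add_apply,
      Matrix.zero_mulVec, Pi.zero_apply, add_zero]
    have := hbot l.val
    simp only [Matrix.mulVec, dotProduct, Matrix.transpose_apply, Matrix.of_apply] at this ⊢
    exact this
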